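/- arXiv:2601.07279 — 2 statements merged into one kernel-verified Lean document; each statement's English description precedes it below -/
import Mathlib

section
/- Let G=(W,E) be a finite simple graph with E nonempty, let k be a natural number, and fix an orientation (x_e, y_e) of each edge e ∈ E. Construct the parliamentary election whose running parties are p_1, o_1, and one party s_w for each vertex w ∈ W, and whose voters are, for each edge e ∈ E: one voter ranking s_{x_e} ≻ s_{y_e} ≻ p_1 ≻ o_1 ≻ (all remaining parties in some fixed order); one voter ranking p_1 ≻ o_1 ≻ (all remaining parties); and two voters ranking o_1 first (then all remaining parties). Let the coalition be C = {p_1} ∪ {s_w : w ∈ W}, with no electoral threshold. Then G contains a k-clique if and only if there exists a set P⁻ ⊆ C with |P⁻| ≤ k such that, in the election obtained by deleting the parties of P⁻, the vote fraction of C ∖ P⁻ is at least 1/2 and the vote fraction of {p_1} is at least ((|E| + k(k−1)/2) / (2|E|)) times the vote fraction of C ∖ P⁻. -/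
open scoped Classical

section Defs

variable {U V : Type*}

/-- `p` is the most-preferred member of the running set `P` under the linear order `L`
(greater means more preferred). -/
def TopOf (L : LinearOrder U) (P : Finset U) (p : U) : Prop :=
  p ∈ P ∧ ∀ q ∈ P, q ≠ p → L.lt q p

/-- Number of voters whose most-preferred running party lies in `A`. -/
noncomputable def votes [Fintype V] (pref : V → LinearOrder U) (P A : Finset U) : ℕ :=
  (Finset.univ.filter fun v : V => ∃ p ∈ A, TopOf (pref v) P p).card

/-- Fraction of voters whose most-preferred running party lies in `A`. -/
noncomputable def voteFrac [Fintype V] (pref : V → LinearOrder U) (P A : Finset U) : ℚ :=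
  (votes pref P A : ℚ) / (Fintype.card V : ℚ)

/-- Total number of votes received by active parties (receiving at least `T` votes) among `A`. -/
noncomputable def activeVotes [Fintype V] (pref : V → LinearOrder U) (P : Finset U) (T : ℕ)
    (A : Finset U) : ℕ :=
  ∑ p ∈ A, if T ≤ votes pref P {p} then votes pref P {p} else 0

/-- Active-vote fraction of `A`. -/
noncomputable def activeFrac [Fintype V] (pref : V → LinearOrder U) (P : Finset U) (T : ℕ)
    (A : Finset U) : ℚ :=
  (activeVotes pref P T A : ℚ) / (activeVotes pref P T P : ℚ)

/-- The linear order `L` respects the tier function `t` (smaller tier = more preferred). -/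
def PrefTiers (L : LinearOrder U) (t : U → ℕ) : Prop :=
  ∀ a b : U, t a < t b → L.lt b a

/-- Pairs `(p, q)` with `p ≻ q` under `L` and `q ≻ p` under `L'`. -/
noncomputable def invPairs [Fintype U] (L L' : LinearOrder U) : Finset (U × U) :=
  Finset.univ.filter fun pq : U × U => L.lt pq.2 pq.1 ∧ L'.lt pq.1 pq.2

/-- Swap-bribery cost of replacing `L` by `L'` with swap-price function `sw`. -/
noncomputable def swapCost [Fintype U] (L L' : LinearOrder U) (sw : U → U → ℝ) : ℝ :=
  ∑ pq ∈ invPairs L L', sw pq.1 pq.2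

end Defs

section Aux
variable {U V : Type*}

lemma topOf_unique (L : LinearOrder U) (P : Finset U) {p q : U}
    (hp : TopOf L P p) (hq : TopOf L P q) : p = q := by
  by_contra h
  have h1 := hp.2 q hq.1 (Ne.symm h)
  have h2 := hq.2 p hp.1 h
  letI := L
  exact absurd h1 (lt_asymm h2)

lemma topOf_of_tiers (L : LinearOrder U) (t : U → ℕ) (h : PrefTiers L t) {P : Finset U} {p : U}
    (hp : p ∈ P) (hmin : ∀ q ∈ P, q ≠ p → t p < t q) : TopOf L P p :=
  ⟨hp, fun q hq hne => h p q (hmin q hq hne)⟩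

lemma votes_eq_card [Fintype V] (pref : V → LinearOrder U) (P A : Finset U) (top : V → U)
    (htop : ∀ v, TopOf (pref v) P (top v)) :
    votes pref P A = (Finset.univ.filter fun v => top v ∈ A).card := by
  have h : (Finset.univ.filter fun v : V => ∃ p ∈ A, TopOf (pref v) P p)
      = Finset.univ.filter fun v => top v ∈ A := by
    ext v
    simp only [Finset.mem_filter, Finset.mem_univ, true_and]
    constructor
    · rintro ⟨p, hpA, hpt⟩
      rwa [← topOf_unique (pref v) P hpt (htop v)]
    · intro h
      exact ⟨top v, h, htop v⟩
  unfold votes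
  rw [h]
end Aux

lemma adj_xy' {W : Type*} (G : SimpleGraph W) [Fintype W] [DecidableEq W] [DecidableRel G.Adj]
    (x y : Sym2 W → W) (hxy : ∀ e ∈ G.edgeFinset, e = s(x e, y e)) (e : ↥G.edgeFinset) :
    G.Adj (x ↑e) (y ↑e) := by
  have h := SimpleGraph.mem_edgeFinset.mp e.2
  rw [hxy _ e.2] at h
  exact h


section Graph
variable {W : Type*} [Fintype W] [DecidableEq W]
variable (G : SimpleGraph W) [DecidableRel G.Adj] (x y : Sym2 W → W)

omit [Fintype W] in
lemma sym2_finset_eq {a b c d : W} (h : s(a,b) = s(c,d)) : ({a,b} : Finset W) = {c,d} := by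
  rw [Sym2.eq_iff] at h
  rcases h with ⟨rfl, rfl⟩ | ⟨rfl, rfl⟩
  · rfl
  · exact Finset.pair_comm _ _

lemma adj_xy (hxy : ∀ e ∈ G.edgeFinset, e = s(x e, y e)) (e : ↥G.edgeFinset) :
    G.Adj (x ↑e) (y ↑e) := by
  have h := SimpleGraph.mem_edgeFinset.mp e.2
  rw [hxy _ e.2] at h
  exact h

lemma g_injective (hxy : ∀ e ∈ G.edgeFinset, e = s(x e, y e)) : Function.Injective
    (fun e : ↥G.edgeFinset => ({x ↑e, y ↑e} : Finset W)) := by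
  intro e e' h
  simp only at h
  have hx : x ↑e = x ↑e' ∨ x ↑e = y ↑e' := by
    have : x ↑e ∈ ({x ↑e', y ↑e'} : Finset W) := h ▸ Finset.mem_insert_self _ _
    simpa using this
  have hy : y ↑e = x ↑e' ∨ y ↑e = y ↑e' := by
    have : y ↑e ∈ ({x ↑e', y ↑e'} : Finset W) := h ▸ (by simp)
    simpa using this
  have hne := (adj_xy G x y hxy e).ne
  have : (↑e : Sym2 W) = ↑e' := by
    rw [hxy _ e.2, hxy _ e'.2]
    rcases hx with h1 | h1 <;> rcases hy with h2 | h2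
    · exact absurd (h1.trans h2.symm) hne
    · rw [h1, h2]
    · rw [h1, h2, Sym2.eq_swap]
    · exact absurd (h1.trans h2.symm) hne
  exact Subtype.ext this

lemma g_maps (hxy : ∀ e ∈ G.edgeFinset, e = s(x e, y e)) (D : Finset W)
    (e : ↥G.edgeFinset) (hx : x ↑e ∈ D) (hy : y ↑e ∈ D) :
    ({x ↑e, y ↑e} : Finset W) ∈ D.powersetCard 2 :=
  Finset.mem_powersetCard.mpr
    ⟨Finset.insert_subset_iff.mpr ⟨hx, Finset.singleton_subset_iff.mpr hy⟩,
     Finset.card_pair (adj_xy G x y hxy e).ne⟩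

/-- G1: count of edges inside `D` is at most `choose |D| 2`. -/
lemma count_le (hxy : ∀ e ∈ G.edgeFinset, e = s(x e, y e)) (D : Finset W) :
    (Finset.univ.filter fun e : ↥G.edgeFinset => x ↑e ∈ D ∧ y ↑e ∈ D).card
      ≤ D.card.choose 2 := by
  rw [← Finset.card_powersetCard 2 D]
  exact Finset.card_le_card_of_injOn _
    (fun e he => by
      obtain ⟨-, h1, h2⟩ := Finset.mem_filter.mp he
      exact g_maps G x y hxy D e h1 h2)
    ((g_injective G x y hxy).injOn)

/-- G2: if the count reaches `choose |D| 2` then `D` is a clique. -/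
lemma clique_of_count (hxy : ∀ e ∈ G.edgeFinset, e = s(x e, y e)) (D : Finset W)
    (h : D.card.choose 2 ≤
      (Finset.univ.filter fun e : ↥G.edgeFinset => x ↑e ∈ D ∧ y ↑e ∈ D).card) :
    G.IsClique (D : Set W) := by
  intro a ha b hb hab
  simp only [Finset.mem_coe] at ha hb
  have hcard : (D.powersetCard 2).card ≤
      (Finset.univ.filter fun e : ↥G.edgeFinset => x ↑e ∈ D ∧ y ↑e ∈ D).card := by
    rwa [Finset.card_powersetCard]
  have hsurj := Finset.surj_on_of_inj_on_of_card_le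
    (s := Finset.univ.filter fun e : ↥G.edgeFinset => x ↑e ∈ D ∧ y ↑e ∈ D)
    (t := D.powersetCard 2)
    (fun e _ => ({x ↑e, y ↑e} : Finset W))
    (fun e he => by
      obtain ⟨-, h1, h2⟩ := Finset.mem_filter.mp he
      exact g_maps G x y hxy D e h1 h2)
    (fun a₁ a₂ h₁ h₂ heq => g_injective G x y hxy heq)
    hcard
  have hmem : ({a, b} : Finset W) ∈ D.powersetCard 2 :=
    Finset.mem_powersetCard.mpr
      ⟨Finset.insert_subset_iff.mpr ⟨ha, Finset.singleton_subset_iff.mpr hb⟩,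
       Finset.card_pair hab⟩
  obtain ⟨e, he, heq⟩ := hsurj _ hmem
  have heq' : ({a, b} : Finset W) = {x ↑e, y ↑e} := heq
  have hane : a ∈ ({x ↑e, y ↑e} : Finset W) := by rw [← heq']; exact Finset.mem_insert_self _ _
  have hbne : b ∈ ({x ↑e, y ↑e} : Finset W) := by rw [← heq']; simp
  simp only [Finset.mem_insert, Finset.mem_singleton] at hane hbne
  have hadj := adj_xy G x y hxy e
  rcases hane with rfl | rfl <;> rcases hbne with rfl | rfl
  · exact absurd rfl hab
  · exact hadj
  · exact hadj.symm
  · exact absurd rfl hab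

/-- G3: a clique `K` yields at least `choose |K| 2` edges inside `K`. -/
lemma count_ge_of_clique (hxy : ∀ e ∈ G.edgeFinset, e = s(x e, y e)) (K : Finset W)
    (hK : G.IsClique (K : Set W)) :
    K.card.choose 2 ≤
      (Finset.univ.filter fun e : ↥G.edgeFinset => x ↑e ∈ K ∧ y ↑e ∈ K).card := by
  rw [← Finset.card_powersetCard]
  apply Finset.card_le_card_of_surjOn (fun e : ↥G.edgeFinset => ({x ↑e, y ↑e} : Finset W))
  intro t ht
  simp only [Finset.mem_coe, Finset.mem_powersetCard] at ht
  obtain ⟨hsub, hcard⟩ := ht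
  obtain ⟨a, b, hab, rfl⟩ := Finset.card_eq_two.mp hcard
  have ha : a ∈ K := hsub (by simp)
  have hb : b ∈ K := hsub (by simp)
  have hadj : G.Adj a b := hK (Finset.mem_coe.mpr ha) (Finset.mem_coe.mpr hb) hab
  have he : s(a, b) ∈ G.edgeFinset := SimpleGraph.mem_edgeFinset.mpr hadj
  have hfe : ({x (s(a,b)), y (s(a,b))} : Finset W) = {a, b} :=
    (sym2_finset_eq (hxy _ he)).symm
  have hxK : x (s(a,b)) ∈ K := by
    have : x (s(a,b)) ∈ ({a,b} : Finset W) := hfe ▸ Finset.mem_insert_self _ _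
    rcases Finset.mem_insert.mp this with h | h
    · rw [h]; exact ha
    · rw [Finset.mem_singleton.mp h]; exact hb
  have hyK : y (s(a,b)) ∈ K := by
    have : y (s(a,b)) ∈ ({a,b} : Finset W) := hfe ▸ (by simp)
    rcases Finset.mem_insert.mp this with h | h
    · rw [h]; exact ha
    · rw [Finset.mem_singleton.mp h]; exact hb
  refine ⟨⟨s(a,b), he⟩, ?_, hfe⟩
  simp only [Finset.mem_coe, Finset.mem_filter, Finset.mem_univ, true_and]
  exact ⟨hxK, hyK⟩

lemma choose2_lt {d k : ℕ} (h : d < k) (hk : 2 ≤ k) : d.choose 2 < k.choose 2 := by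
  obtain ⟨k', rfl⟩ : ∃ k', k = k' + 1 := ⟨k - 1, by omega⟩
  have h1 : d.choose 2 ≤ k'.choose 2 := Nat.choose_le_choose _ (by omega)
  have h2 : (k' + 1).choose 2 = k' + k'.choose 2 := by
    rw [show (2:ℕ) = 1 + 1 from rfl, Nat.choose_succ_succ, Nat.choose_one_right]
  omega

end Graph

lemma election_votes
    {W : Type*} [Fintype W] [DecidableEq W]
    (G : SimpleGraph W) [DecidableRel G.Adj]
    (x y : Sym2 W → W) (hxy : ∀ e ∈ G.edgeFinset, e = s(x e, y e))
    (pref : ↥G.edgeFinset × Fin 4 → LinearOrder (W ⊕ Fin 2))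
    (hpref : ∀ (e : ↥G.edgeFinset) (i : Fin 4), PrefTiers (pref (e, i))
      (if i = 0 then
        Sum.elim (fun w => if w = x ↑e then (0 : ℕ) else if w = y ↑e then 1 else 4)
          (fun j : Fin 2 => if j = 0 then 2 else 3)
      else if i = 1 then
        Sum.elim (fun _ => (2 : ℕ)) (fun j : Fin 2 => if j = 0 then 0 else 1)
      else
        Sum.elim (fun _ => (1 : ℕ)) (fun j : Fin 2 => if j = 1 then 0 else 1)))
    (Pm : Finset (W ⊕ Fin 2))
    (hsub : Pm ⊆ insert (Sum.inr 0) (Finset.univ.image Sum.inl)) :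
    ((Sum.inr 0 : W ⊕ Fin 2) ∉ Pm →
      votes pref (Finset.univ \ Pm)
          (insert (Sum.inr 0) (Finset.univ.image Sum.inl) \ Pm) = 2 * G.edgeFinset.card ∧
      votes pref (Finset.univ \ Pm) {Sum.inr 0}
        = G.edgeFinset.card + (Finset.univ.filter fun e : ↥G.edgeFinset =>
            Sum.inl (x ↑e) ∈ Pm ∧ Sum.inl (y ↑e) ∈ Pm).card) ∧
    ((Sum.inr 0 : W ⊕ Fin 2) ∈ Pm →
      votes pref (Finset.univ \ Pm)
          (insert (Sum.inr 0) (Finset.univ.image Sum.inl) \ Pm) ≤ G.edgeFinset.card) := by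
  classical
  set C : Finset (W ⊕ Fin 2) := insert (Sum.inr 0) (Finset.univ.image Sum.inl) with hC
  set P : Finset (W ⊕ Fin 2) := Finset.univ \ Pm with hP
  have hPmem : ∀ q : W ⊕ Fin 2, q ∈ P ↔ q ∉ Pm := fun q => by
    simp [hP]
  have ho1 : (Sum.inr 1 : W ⊕ Fin 2) ∉ Pm := by
    intro h
    have := hsub h
    simp [hC] at this
  set top : ↥G.edgeFinset × Fin 4 → W ⊕ Fin 2 := fun v =>
    if v.2 = 0 then
      (if Sum.inl (x ↑v.1) ∈ Pm then
        (if Sum.inl (y ↑v.1) ∈ Pm then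
          (if (Sum.inr 0 : W ⊕ Fin 2) ∈ Pm then Sum.inr 1 else Sum.inr 0)
         else Sum.inl (y ↑v.1))
       else Sum.inl (x ↑v.1))
    else if v.2 = 1 then (if (Sum.inr 0 : W ⊕ Fin 2) ∈ Pm then Sum.inr 1 else Sum.inr 0)
    else Sum.inr 1 with htopdef
  have htop0v : ∀ e, top (e, (0 : Fin 4)) =
      (if Sum.inl (x ↑e) ∈ Pm then
        (if Sum.inl (y ↑e) ∈ Pm then
          (if (Sum.inr 0 : W ⊕ Fin 2) ∈ Pm then Sum.inr 1 else Sum.inr 0)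
         else Sum.inl (y ↑e))
       else Sum.inl (x ↑e)) := fun e => rfl
  have htop1v : ∀ e, top (e, (1 : Fin 4)) =
      (if (Sum.inr 0 : W ⊕ Fin 2) ∈ Pm then Sum.inr 1 else Sum.inr 0) := fun e => rfl
  have htop2v : ∀ e, top (e, (2 : Fin 4)) = Sum.inr 1 := fun e => rfl
  have htop3v : ∀ e, top (e, (3 : Fin 4)) = Sum.inr 1 := fun e => rfl
  have htop : ∀ v : ↥G.edgeFinset × Fin 4, TopOf (pref v) P (top v) := by
    rintro ⟨e, i⟩
    have hne_xy : x ↑e ≠ y ↑e := (adj_xy' G x y hxy e).ne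
    fin_cases i
    · -- i = 0
      show TopOf (pref (e, (0 : Fin 4))) P (top (e, (0 : Fin 4)))
      have ht := hpref e (0 : Fin 4)
      norm_num at ht
      rw [htop0v e]
      by_cases h1 : Sum.inl (x ↑e) ∈ Pm
      · by_cases h2 : Sum.inl (y ↑e) ∈ Pm
        · by_cases h3 : (Sum.inr 0 : W ⊕ Fin 2) ∈ Pm
          · rw [if_pos h1, if_pos h2, if_pos h3]
            refine topOf_of_tiers _ _ ht ((hPmem _).mpr ho1) ?_
            rintro (w | j) hq hne <;> simp only [Sum.elim_inl, Sum.elim_inr]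
            · have hw1 : w ≠ x ↑e := fun h => (hPmem _).mp hq (by rw [h]; exact h1)
              have hw2 : w ≠ y ↑e := fun h => (hPmem _).mp hq (by rw [h]; exact h2)
              simp [hw1, hw2]
            · fin_cases j
              · exact absurd h3 ((hPmem _).mp hq)
              · exact absurd rfl hne
          · rw [if_pos h1, if_pos h2, if_neg h3]
            refine topOf_of_tiers _ _ ht ((hPmem _).mpr h3) ?_
            rintro (w | j) hq hne <;> simp only [Sum.elim_inl, Sum.elim_inr]
            · have hw1 : w ≠ x ↑e := fun h => (hPmem _).mp hq (by rw [h]; exact h1)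
              have hw2 : w ≠ y ↑e := fun h => (hPmem _).mp hq (by rw [h]; exact h2)
              simp [hw1, hw2]
            · fin_cases j
              · exact absurd rfl hne
              · decide
        · rw [if_pos h1, if_neg h2]
          refine topOf_of_tiers _ _ ht ((hPmem _).mpr h2) ?_
          rintro (w | j) hq hne <;> simp only [Sum.elim_inl, Sum.elim_inr]
          · have hw1 : w ≠ x ↑e := fun h => (hPmem _).mp hq (by rw [h]; exact h1)
            have hw2 : w ≠ y ↑e := fun h => hne (by rw [h])
            simp [hw1, hw2, Ne.symm hne_xy]
          · have hyx : y ↑e ≠ x ↑e := Ne.symm hne_xy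
            fin_cases j <;> simp [hyx]
      · rw [if_neg h1]
        refine topOf_of_tiers _ _ ht ((hPmem _).mpr h1) ?_
        rintro (w | j) hq hne <;> simp only [Sum.elim_inl, Sum.elim_inr]
        · have hw : w ≠ x ↑e := fun h => hne (by rw [h])
          simp [hw]
          split_ifs <;> norm_num
        · fin_cases j <;> simp
    · -- i = 1
      show TopOf (pref (e, (1 : Fin 4))) P (top (e, (1 : Fin 4)))
      have ht := hpref e (1 : Fin 4)
      norm_num at ht
      rw [htop1v e]
      by_cases h3 : (Sum.inr 0 : W ⊕ Fin 2) ∈ Pm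
      · rw [if_pos h3]
        refine topOf_of_tiers _ _ ht ((hPmem _).mpr ho1) ?_
        rintro (w | j) hq hne <;> simp only [Sum.elim_inl, Sum.elim_inr]
        · decide
        · fin_cases j
          · exact absurd h3 ((hPmem _).mp hq)
          · exact absurd rfl hne
      · rw [if_neg h3]
        refine topOf_of_tiers _ _ ht ((hPmem _).mpr h3) ?_
        rintro (w | j) hq hne <;> simp only [Sum.elim_inl, Sum.elim_inr]
        · decide
        · fin_cases j
          · exact absurd rfl hne
          · decide
    · -- i = 2
      show TopOf (pref (e, (2 : Fin 4))) P (top (e, (2 : Fin 4)))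
      have ht := hpref e (2 : Fin 4)
      simp only [show ((2 : Fin 4) = 0) = False from by decide,
        show ((2 : Fin 4) = 1) = False from by decide, if_false] at ht
      rw [htop2v e]
      refine topOf_of_tiers _ _ ht ((hPmem _).mpr ho1) ?_
      rintro (w | j) hq hne <;> simp only [Sum.elim_inl, Sum.elim_inr]
      · decide
      · fin_cases j
        · decide
        · exact absurd rfl hne
    · -- i = 3
      show TopOf (pref (e, (3 : Fin 4))) P (top (e, (3 : Fin 4)))
      have ht := hpref e (3 : Fin 4)
      simp only [show ((3 : Fin 4) = 0) = False from by decide,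
        show ((3 : Fin 4) = 1) = False from by decide, if_false] at ht
      rw [htop3v e]
      refine topOf_of_tiers _ _ ht ((hPmem _).mpr ho1) ?_
      rintro (w | j) hq hne <;> simp only [Sum.elim_inl, Sum.elim_inr]
      · decide
      · fin_cases j
        · decide
        · exact absurd rfl hne
  have hcount : ∀ A : Finset (W ⊕ Fin 2), votes pref P A
      = ∑ e : ↥G.edgeFinset, ((if top (e, 0) ∈ A then 1 else 0) + (if top (e, 1) ∈ A then 1 else 0)
        + (if top (e, 2) ∈ A then 1 else 0) + (if top (e, 3) ∈ A then 1 else 0)) := by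
    intro A
    rw [votes_eq_card pref P A top htop, Finset.card_filter, Fintype.sum_prod_type]
    refine Finset.sum_congr rfl fun e _ => ?_
    rw [Fin.sum_univ_four]
    congr <;> exact Subsingleton.elim _ _
  have hp1C : (Sum.inr 0 : W ⊕ Fin 2) ∈ C := Finset.mem_insert_self _ _
  have hinlC : ∀ w : W, (Sum.inl w : W ⊕ Fin 2) ∈ C := fun w => by simp [hC]
  have ho1C : (Sum.inr 1 : W ⊕ Fin 2) ∉ C := by simp [hC]
  have hind : ∀ u : W ⊕ Fin 2, u ∈ C → u ∉ Pm →
      (if u ∈ C \ Pm then (1 : ℕ) else 0) = 1 := fun u h1 h2 =>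
    if_pos (Finset.mem_sdiff.mpr ⟨h1, h2⟩)
  have houtd : ∀ u : W ⊕ Fin 2, u ∉ C →
      (if u ∈ C \ Pm then (1 : ℕ) else 0) = 0 := fun u h =>
    if_neg fun hm => h (Finset.mem_sdiff.mp hm).1
  constructor
  · intro hp1
    constructor
    · -- coalition votes = 2 m
      rw [hcount]
      have hterm : ∀ e : ↥G.edgeFinset,
          ((if top (e, 0) ∈ C \ Pm then 1 else 0) + (if top (e, 1) ∈ C \ Pm then 1 else 0)
            + (if top (e, 2) ∈ C \ Pm then 1 else 0) + (if top (e, 3) ∈ C \ Pm then 1 else 0))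
          = 2 := by
        intro e
        rw [htop1v, if_neg hp1, htop2v, htop3v, hind _ hp1C hp1, houtd _ ho1C, htop0v]
        by_cases h1 : Sum.inl (x ↑e) ∈ Pm
        · by_cases h2 : Sum.inl (y ↑e) ∈ Pm
          · rw [if_pos h1, if_pos h2, if_neg hp1, hind _ hp1C hp1]
          · rw [if_pos h1, if_neg h2, hind _ (hinlC _) h2]
        · rw [if_neg h1, hind _ (hinlC _) h1]
      rw [Finset.sum_congr rfl fun e _ => hterm e, Finset.sum_const, smul_eq_mul,
        Finset.card_univ, Fintype.card_coe, mul_comm]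
    · -- p1 votes = m + eD
      rw [hcount]
      have hterm : ∀ e : ↥G.edgeFinset,
          ((if top (e, 0) ∈ ({Sum.inr 0} : Finset (W ⊕ Fin 2)) then 1 else 0)
            + (if top (e, 1) ∈ ({Sum.inr 0} : Finset (W ⊕ Fin 2)) then 1 else 0)
            + (if top (e, 2) ∈ ({Sum.inr 0} : Finset (W ⊕ Fin 2)) then 1 else 0)
            + (if top (e, 3) ∈ ({Sum.inr 0} : Finset (W ⊕ Fin 2)) then 1 else 0))
          = (if Sum.inl (x ↑e) ∈ Pm ∧ Sum.inl (y ↑e) ∈ Pm then 1 else 0) + 1 := by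
        intro e
        have e1 : (if (Sum.inr 0 : W ⊕ Fin 2) ∈ ({Sum.inr 0} : Finset (W ⊕ Fin 2))
            then (1:ℕ) else 0) = 1 := if_pos (Finset.mem_singleton_self _)
        have e2 : (if (Sum.inr 1 : W ⊕ Fin 2) ∈ ({Sum.inr 0} : Finset (W ⊕ Fin 2))
            then (1:ℕ) else 0) = 0 := if_neg (by simp)
        have e3 : ∀ w : W, (if (Sum.inl w : W ⊕ Fin 2) ∈ ({Sum.inr 0} : Finset (W ⊕ Fin 2))
            then (1:ℕ) else 0) = 0 := fun w => if_neg (by simp)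
        rw [htop1v, if_neg hp1, htop2v, htop3v, e1, e2, htop0v]
        by_cases h1 : Sum.inl (x ↑e) ∈ Pm
        · by_cases h2 : Sum.inl (y ↑e) ∈ Pm
          · rw [if_pos h1, if_pos h2, if_neg hp1, e1, if_pos ⟨h1, h2⟩]
          · rw [if_pos h1, if_neg h2, e3, if_neg (fun h => h2 h.2)]
        · rw [if_neg h1, e3, if_neg (fun h => h1 h.1)]
      rw [Finset.sum_congr rfl fun e _ => hterm e, Finset.sum_add_distrib, Finset.sum_const,
        smul_eq_mul, mul_one, Finset.card_univ, Fintype.card_coe, ← Finset.card_filter]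
      exact Nat.add_comm _ _
  · intro hp1
    rw [hcount]
    calc (∑ e : ↥G.edgeFinset,
          ((if top (e, 0) ∈ C \ Pm then 1 else 0) + (if top (e, 1) ∈ C \ Pm then 1 else 0)
            + (if top (e, 2) ∈ C \ Pm then 1 else 0) + (if top (e, 3) ∈ C \ Pm then 1 else 0)))
        ≤ ∑ _e : ↥G.edgeFinset, 1 := by
          refine Finset.sum_le_sum fun e _ => ?_
          rw [htop1v, if_pos hp1, htop2v, htop3v, houtd _ ho1C]
          split_ifs <;> norm_num
      _ = G.edgeFinset.card := by
          rw [Finset.sum_const, smul_eq_mul, mul_one, Finset.card_univ, Fintype.card_coe]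

lemma frac_ineq (m c d : ℚ) (hm : 0 < m) (hc : 0 ≤ c) (hcd : c ≤ d) :
    (m + c) / (2 * m) * (2 * m / (m * 4)) ≤ (m + d) / (m * 4) := by
  have h2m : (0:ℚ) < 2 * m := by linarith
  have h4m : (0:ℚ) < m * 4 := by linarith
  rw [div_mul_div_comm, div_le_div_iff₀ (mul_pos h2m h4m) h4m]
  nlinarith [mul_nonneg (sub_nonneg.mpr hcd) (mul_pos hm hm).le]

lemma frac_ineq_rev (m c d : ℚ) (hm : 0 < m)
    (h : (m + c) / (2 * m) * (2 * m / (m * 4)) ≤ (m + d) / (m * 4)) : c ≤ d := by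
  have h2m : (0:ℚ) < 2 * m := by linarith
  have h4m : (0:ℚ) < m * 4 := by linarith
  rw [div_mul_div_comm, div_le_div_iff₀ (mul_pos h2m h4m) h4m] at h
  by_contra hcd
  push_neg at hcd
  nlinarith [mul_pos (mul_pos hm hm) (sub_pos.mpr hcd)]

lemma half_frac (m : ℚ) (hm : 0 < m) : (1:ℚ)/2 ≤ (2*m)/(m*4) := by
  rw [div_le_div_iff₀ (by norm_num) (by linarith)]
  linarith

/-- Election (deleting coalition parties, J+F objective, no threshold):
parties are $p_1$ (= `Sum.inr 0`), $o_1$ (= `Sum.inr 1`), and one party $s_w$ (= `Sum.inl w`)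
per vertex; per edge $e$ there are four voters: one ranking
$s_{x_e} ≻ s_{y_e} ≻ p_1 ≻ o_1 ≻$ rest, one ranking $p_1 ≻ o_1 ≻$ rest and two ranking $o_1$
first.  The coalition is $C = \{p_1\} ∪ \{s_w\}$.  Then $G$ has a $k$-clique iff at most $k$
coalition parties can be deleted so that afterwards the coalition's vote fraction is at
least $1/2$ and $p_1$'s vote fraction is at least $(|E|+k(k-1)/2)/(2|E|)$ times the
coalition's. -/
theorem dcp_JF_clique_reduction
    {W : Type*} [Fintype W] [DecidableEq W]
    (G : SimpleGraph W) [DecidableRel G.Adj] (hE : G.edgeFinset.Nonempty) (k : ℕ)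
    (x y : Sym2 W → W) (hxy : ∀ e ∈ G.edgeFinset, e = s(x e, y e))
    (pref : ↥G.edgeFinset × Fin 4 → LinearOrder (W ⊕ Fin 2))
    (hpref : ∀ (e : ↥G.edgeFinset) (i : Fin 4), PrefTiers (pref (e, i))
      (if i = 0 then
        Sum.elim (fun w => if w = x ↑e then (0 : ℕ) else if w = y ↑e then 1 else 4)
          (fun j : Fin 2 => if j = 0 then 2 else 3)
      else if i = 1 then
        Sum.elim (fun _ => (2 : ℕ)) (fun j : Fin 2 => if j = 0 then 0 else 1)
      else
        Sum.elim (fun _ => (1 : ℕ)) (fun j : Fin 2 => if j = 1 then 0 else 1))) :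
    (∃ K : Finset W, K.card = k ∧ G.IsClique (K : Set W)) ↔
    (∃ Pm : Finset (W ⊕ Fin 2),
      Pm ⊆ insert (Sum.inr 0) (Finset.univ.image Sum.inl) ∧ Pm.card ≤ k ∧
      (1 : ℚ) / 2 ≤
        voteFrac pref (Finset.univ \ Pm)
          (insert (Sum.inr 0) (Finset.univ.image Sum.inl) \ Pm) ∧
      (((G.edgeFinset.card + k * (k - 1) / 2 : ℕ) : ℚ) / ((2 * G.edgeFinset.card : ℕ) : ℚ)) *
          voteFrac pref (Finset.univ \ Pm)
            (insert (Sum.inr 0) (Finset.univ.image Sum.inl) \ Pm) ≤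
        voteFrac pref (Finset.univ \ Pm) {Sum.inr 0}) := by
  classical
  have hm0 : 0 < G.edgeFinset.card := Finset.card_pos.mpr hE
  have hmQ : (0:ℚ) < (G.edgeFinset.card : ℚ) := by exact_mod_cast hm0
  have hcardV : Fintype.card (↥G.edgeFinset × Fin 4) = G.edgeFinset.card * 4 := by
    rw [Fintype.card_prod, Fintype.card_coe, Fintype.card_fin]
  constructor
  · -- forward
    rintro ⟨K, hKcard, hKclique⟩
    have hsubK : K.image (Sum.inl : W → W ⊕ Fin 2) ⊆ insert (Sum.inr 0) (Finset.univ.image Sum.inl) := by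
      intro a ha
      obtain ⟨w, _, rfl⟩ := Finset.mem_image.mp ha
      exact Finset.mem_insert_of_mem (Finset.mem_image.mpr ⟨w, Finset.mem_univ _, rfl⟩)
    have hp1 : (Sum.inr 0 : W ⊕ Fin 2) ∉ K.image Sum.inl := by simp
    obtain ⟨v1, v2⟩ := (election_votes G x y hxy pref hpref (K.image Sum.inl) hsubK).1 hp1
    have hfilterK : (Finset.univ.filter fun e : ↥G.edgeFinset =>
          Sum.inl (x ↑e) ∈ K.image (Sum.inl : W → W ⊕ Fin 2) ∧
          Sum.inl (y ↑e) ∈ K.image (Sum.inl : W → W ⊕ Fin 2))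
        = Finset.univ.filter fun e : ↥G.edgeFinset => x ↑e ∈ K ∧ y ↑e ∈ K :=
      Finset.filter_congr fun e _ => by simp
    rw [hfilterK] at v2
    have hnat : k * (k - 1) / 2 ≤ (Finset.univ.filter fun e : ↥G.edgeFinset =>
        x ↑e ∈ K ∧ y ↑e ∈ K).card := by
      have := count_ge_of_clique G x y hxy K hKclique
      rw [hKcard, Nat.choose_two_right] at this
      exact this
    refine ⟨K.image Sum.inl, hsubK, ?_, ?_, ?_⟩
    · rw [Finset.card_image_of_injective _ Sum.inl_injective, hKcard]
    · unfold voteFrac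
      rw [v1, hcardV]
      push_cast
      exact half_frac _ hmQ
    · unfold voteFrac
      rw [v1, v2, hcardV]
      push_cast
      exact frac_ineq _ _ _ hmQ (by positivity) (by exact_mod_cast hnat)
  · -- backward
    rintro ⟨Pm, hsub, hcard, h1, h2⟩
    have hp1 : (Sum.inr 0 : W ⊕ Fin 2) ∉ Pm := by
      by_contra hp1'
      have hv := (election_votes G x y hxy pref hpref Pm hsub).2 hp1'
      unfold voteFrac at h1
      rw [hcardV] at h1
      have hpos : (0:ℚ) < ((G.edgeFinset.card * 4 : ℕ):ℚ) := by
        exact_mod_cast (by omega : 0 < G.edgeFinset.card * 4)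
      rw [le_div_iff₀ hpos] at h1
      have hx : (1:ℚ)/2 * ((G.edgeFinset.card * 4 : ℕ):ℚ) ≤ (G.edgeFinset.card:ℚ) :=
        h1.trans (Nat.cast_le.mpr hv)
      push_cast at hx
      linarith
    obtain ⟨v1, v2⟩ := (election_votes G x y hxy pref hpref Pm hsub).1 hp1
    unfold voteFrac at h2
    rw [v1, v2, hcardV] at h2
    push_cast at h2
    have hkd : k * (k - 1) / 2 ≤ (Finset.univ.filter fun e : ↥G.edgeFinset =>
        Sum.inl (x ↑e) ∈ Pm ∧ Sum.inl (y ↑e) ∈ Pm).card := by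
      exact_mod_cast frac_ineq_rev _ _ _ hmQ h2
    -- the deleted vertex set
    set D := Finset.univ.filter (fun w : W => Sum.inl w ∈ Pm) with hD
    have hDmem : ∀ w : W, w ∈ D ↔ Sum.inl w ∈ Pm := fun w => by simp [hD]
    have hPmeq : Pm = D.image Sum.inl := by
      ext a
      constructor
      · intro ha
        have hmem := hsub ha
        rcases a with w | j
        · exact Finset.mem_image.mpr ⟨w, (hDmem w).mpr ha, rfl⟩
        · exfalso
          simp only [Finset.mem_insert, Finset.mem_image] at hmem
          rcases hmem with hmem | ⟨w, _, hw⟩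
          · rw [Sum.inr.injEq] at hmem
            rw [hmem] at ha
            exact hp1 ha
          · exact absurd hw (by simp)
      · intro ha
        obtain ⟨w, hw, rfl⟩ := Finset.mem_image.mp ha
        exact (hDmem w).mp hw
    have hDcard : D.card ≤ k := by
      have : Pm.card = D.card := by
        rw [hPmeq, Finset.card_image_of_injective _ Sum.inl_injective]
      omega
    have hfilter : (Finset.univ.filter fun e : ↥G.edgeFinset =>
          Sum.inl (x ↑e) ∈ Pm ∧ Sum.inl (y ↑e) ∈ Pm)
        = Finset.univ.filter fun e : ↥G.edgeFinset => x ↑e ∈ D ∧ y ↑e ∈ D :=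
      Finset.filter_congr fun e _ => by simp [hDmem]
    by_cases hk2 : 2 ≤ k
    · have hle := count_le G x y hxy D
      have hDk : D.card = k := by
        by_contra hne
        have hlt : D.card < k := lt_of_le_of_ne hDcard hne
        have hcontr : k.choose 2 < k.choose 2 := calc
          k.choose 2 = k * (k - 1) / 2 := Nat.choose_two_right k
          _ ≤ (Finset.univ.filter fun e : ↥G.edgeFinset =>
                Sum.inl (x ↑e) ∈ Pm ∧ Sum.inl (y ↑e) ∈ Pm).card := hkd
          _ = (Finset.univ.filter fun e : ↥G.edgeFinset =>
                x ↑e ∈ D ∧ y ↑e ∈ D).card := congrArg Finset.card hfilter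
          _ ≤ D.card.choose 2 := hle
          _ < k.choose 2 := choose2_lt hlt hk2
        exact absurd hcontr (lt_irrefl _)
      refine ⟨D, hDk, clique_of_count G x y hxy D ?_⟩
      rw [hDk, Nat.choose_two_right, ← hfilter]
      exact hkd
    · push_neg at hk2
      interval_cases k
      · exact ⟨∅, by simp, by simp⟩
      · obtain ⟨e, he⟩ := hE
        exact ⟨{x e}, Finset.card_singleton _, by simp⟩
end

section
/- Let E=(P,V,≻) be a parliamentary election with no electoral threshold, C ⊆ P a coalition with favored party p_1 ∈ C, nonnegative swap-price functions sw_i for each voter i, a budget B ≥ 0, and targets φ ∈ (0,1] and ρ ∈ [0,1]. For a voter i and a nonempty set g ⊆ P, let m_i(g) denote the minimum over p ∈ g of Σ_{q : q ≻_i p} sw_i(q,p) (the least swap cost of bringing some member of g to the top of voter i's order). Then there exists a swap bribe of total cost at most B after which the vote fraction of C is at least φ and the vote fraction of {p_1} is at least ρ times the vote fraction of C, if and only if there exists a function α assigning to each voter one of the nonempty sets among {p_1}, C ∖ {p_1}, and P ∖ C, such that Σ_{i∈V} m_i(α(i)) ≤ B, the number of voters assigned to {p_1} or C ∖ {p_1}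 is at least φ·|V|, and the number of voters assigned to {p_1} is at least ρ times the number of voters assigned to {p_1} or C ∖ {p_1}. -/
open scoped Classical

section Stmt11

variable {U : Type*} [Fintype U]

/-- Cost of lifting party $p$ to the top of the order $L$:  $Σ_{q ≻ p} sw(q,p)$. -/
noncomputable def liftCost (L : LinearOrder U) (sw : U → U → ℝ) (p : U) : ℝ :=
  ∑ q ∈ Finset.univ.filter fun q : U => L.lt p q, sw q p

/-- $m_i(g)$: least swap cost of bringing some member of the (nonempty) set $g$ to the top. -/
noncomputable def minLiftCost (L : LinearOrder U) (sw : U → U → ℝ) (g : Finset U) : ℝ :=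
  if h : g.Nonempty then (g.image (liftCost L sw)).min' (h.image _) else 0



/-- The top element of a linear order on a finite nonempty type. -/
noncomputable def topElem [Nonempty U] (L : LinearOrder U) : U :=
  @Finset.max' U L Finset.univ Finset.univ_nonempty

lemma topOf_topElem [Nonempty U] (L : LinearOrder U) :
    TopOf L Finset.univ (topElem L) := by
  refine ⟨Finset.mem_univ _, fun q _ hq => ?_⟩
  letI := L
  exact lt_of_le_of_ne (Finset.le_max' _ _ (Finset.mem_univ q)) hq

lemma topOf_iff [Nonempty U] (L : LinearOrder U) (p : U) :
    TopOf L Finset.univ p ↔ p = topElem L := by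
  constructor
  · intro hp
    by_contra h
    letI := L
    exact lt_asymm ((topOf_topElem L).2 p (Finset.mem_univ _) h)
      (hp.2 _ (Finset.mem_univ _) (Ne.symm h))
  · rintro rfl; exact topOf_topElem L

lemma votes_univ_eq [Nonempty U] {V : Type*} [Fintype V] (pref : V → LinearOrder U)
    (A : Finset U) :
    votes pref Finset.univ A =
      (Finset.univ.filter fun v : V => topElem (pref v) ∈ A).card := by
  unfold votes
  congr 1
  apply Finset.filter_congr
  intro v _
  constructor
  · rintro ⟨p, hpA, hp⟩; rwa [(topOf_iff _ p).1 hp] at hpA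
  · intro h; exact ⟨_, h, topOf_topElem _⟩

lemma liftCost_le_swapCost (L L' : LinearOrder U) (sw : U → U → ℝ)
    (hsw : ∀ a b, 0 ≤ sw a b) (p : U) (hp : TopOf L' Finset.univ p) :
    liftCost L sw p ≤ swapCost L L' sw := by
  have hsub : (Finset.univ.filter fun q : U => L.lt p q).image (fun q => (q, p))
      ⊆ invPairs L L' := by
    intro pq hpq
    simp only [Finset.mem_image, Finset.mem_filter, Finset.mem_univ, true_and] at hpq
    obtain ⟨q, hq, rfl⟩ := hpq
    refine Finset.mem_filter.2 ⟨Finset.mem_univ _, hq, ?_⟩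
    refine hp.2 q (Finset.mem_univ _) ?_
    rintro rfl
    exact (letI := L; lt_irrefl _ hq)
  have hinj : ∀ a ∈ Finset.univ.filter fun q : U => L.lt p q,
      ∀ b ∈ Finset.univ.filter fun q : U => L.lt p q,
      (fun q => (q, p)) a = (fun q => (q, p)) b → a = b := by
    intro a _ b _ h
    exact congrArg Prod.fst h
  have him : ∑ pq ∈ (Finset.univ.filter fun q : U => L.lt p q).image (fun q => (q, p)),
      sw pq.1 pq.2 = liftCost L sw p := by
    rw [Finset.sum_image hinj]
    simp only [liftCost]
    congr!
  calc liftCost L sw p = _ := him.symm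
    _ ≤ swapCost L L' sw :=
        Finset.sum_le_sum_of_subset_of_nonneg hsub (fun pq _ _ => hsw _ _)

/-- The order obtained from `L` by moving `p` to the top. -/
noncomputable def moveTop (L : LinearOrder U) (p : U) : LinearOrder U :=
  letI := L
  letI : DecidableEq U := Classical.decEq U
  LinearOrder.lift' (fun a : U => toLex ((decide (a = p) : Bool), a))
    (fun a b h => congrArg (fun x : Lex (Bool × U) => (ofLex x).2) h)

lemma moveTop_lt (L : LinearOrder U) (p a b : U) :
    (moveTop L p).lt a b ↔
      ((a ≠ p ∧ b = p) ∨ ((a = p ↔ b = p) ∧ L.lt a b)) := by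
  letI := L
  letI : DecidableEq U := Classical.decEq U
  show toLex ((decide (a = p) : Bool), a) < toLex ((decide (b = p) : Bool), b) ↔ _
  rw [Prod.Lex.lt_iff]
  simp [Bool.lt_iff, decide_eq_decide]

lemma moveTop_top (L : LinearOrder U) (p : U) :
    TopOf (moveTop L p) Finset.univ p := by
  refine ⟨Finset.mem_univ _, fun q _ hq => ?_⟩
  rw [moveTop_lt]
  exact Or.inl ⟨hq, rfl⟩

lemma invPairs_moveTop (L : LinearOrder U) (p : U) :
    invPairs L (moveTop L p) =
      (Finset.univ.filter fun q : U => L.lt p q).image (fun q => (q, p)) := by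
  ext pq
  simp only [invPairs, Finset.mem_filter, Finset.mem_univ, true_and, Finset.mem_image]
  constructor
  · rintro ⟨h1, h2⟩
    rw [moveTop_lt] at h2
    rcases h2 with ⟨-, h2⟩ | ⟨-, h2⟩
    · exact ⟨pq.1, by rw [h2] at h1; exact h1, by rw [← h2]⟩
    · exact absurd h1 (letI := L; asymm h2)
  · rintro ⟨q, hq, rfl⟩
    refine ⟨hq, ?_⟩
    rw [moveTop_lt]
    exact Or.inl ⟨fun h => (letI := L; lt_irrefl p (h ▸ hq)), rfl⟩

lemma swapCost_moveTop (L : LinearOrder U) (p : U) (sw : U → U → ℝ) :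
    swapCost L (moveTop L p) sw = liftCost L sw p := by
  rw [swapCost, invPairs_moveTop,
    Finset.sum_image (fun a _ b _ h => congrArg Prod.fst h)]
  rfl

lemma minLiftCost_le (L : LinearOrder U) (sw : U → U → ℝ) {g : Finset U} {p : U}
    (hp : p ∈ g) : minLiftCost L sw g ≤ liftCost L sw p := by
  rw [minLiftCost, dif_pos ⟨p, hp⟩]
  exact Finset.min'_le _ _ (Finset.mem_image_of_mem _ hp)

lemma exists_minLiftCost (L : LinearOrder U) (sw : U → U → ℝ) {g : Finset U}
    (hg : g.Nonempty) : ∃ p ∈ g, liftCost L sw p = minLiftCost L sw g := by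
  rw [minLiftCost, dif_pos hg]
  have := Finset.min'_mem (g.image (liftCost L sw)) (hg.image _)
  obtain ⟨p, hp, he⟩ := Finset.mem_image.1 this
  exact ⟨p, hp, he⟩


/-- With no electoral threshold, a swap bribe of cost at most $B$ achieving
the J+F objective exists iff there is an assignment of voters to the nonempty sets among
$\{p_1\}$, $C ∖ \{p_1\}$, $P ∖ C$ of total min-lift cost at most $B$ with the right counts. -/
theorem swap_bribery_characterization
    {V : Type*} [Fintype V] [Nonempty V] [Nonempty U]
    (pref : V → LinearOrder U) (C : Finset U) (p1 : U) (hp1 : p1 ∈ C)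
    (sw : V → U → U → ℝ) (hsw : ∀ i a b, 0 ≤ sw i a b)
    (B : ℝ) (hB : 0 ≤ B) (φ ρ : ℚ) (hφ0 : 0 < φ) (hφ1 : φ ≤ 1) (hρ0 : 0 ≤ ρ) (hρ1 : ρ ≤ 1) :
    (∃ pref' : V → LinearOrder U,
        (∑ i : V, swapCost (pref i) (pref' i) (sw i)) ≤ B ∧
        φ ≤ voteFrac pref' Finset.univ C ∧
        ρ * voteFrac pref' Finset.univ C ≤ voteFrac pref' Finset.univ {p1}) ↔
      (∃ α : V → Finset U,
        (∀ i : V, α i = {p1} ∨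
          (α i = C \ {p1} ∧ (C \ {p1}).Nonempty) ∨
          (α i = Finset.univ \ C ∧ (Finset.univ \ C : Finset U).Nonempty)) ∧
        (∑ i : V, minLiftCost (pref i) (sw i) (α i)) ≤ B ∧
        φ * (Fintype.card V : ℚ) ≤
          ((Finset.univ.filter fun i : V => α i = {p1} ∨ α i = C \ {p1}).card : ℚ) ∧
        ρ * ((Finset.univ.filter fun i : V => α i = {p1} ∨ α i = C \ {p1}).card : ℚ) ≤
          ((Finset.univ.filter fun i : V => α i = {p1}).card : ℚ)) := by

  classical
  have hn : (0:ℚ) < (Fintype.card V : ℚ) := by exact_mod_cast Fintype.card_pos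
  have hne1 : C \ {p1} ≠ {p1} := by
    intro h
    have : p1 ∈ C \ {p1} := by rw [h]; exact Finset.mem_singleton_self p1
    simp at this
  have hne2 : (Finset.univ \ C : Finset U) ≠ {p1} := by
    intro h
    have : p1 ∈ (Finset.univ \ C : Finset U) := by
      rw [h]; exact Finset.mem_singleton_self p1
    simp [hp1] at this
  constructor
  · rintro ⟨pref', hcost, hφ, hρ⟩
    set t : V → U := fun i => topElem (pref' i) with ht
    set α : V → Finset U := fun i =>
      if t i = p1 then {p1} else if t i ∈ C then C \ {p1} else Finset.univ \ C with hα
    have hmem : ∀ i, t i ∈ α i := by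
      intro i
      by_cases h1 : t i = p1
      · simp [hα, h1]
      · by_cases h2 : t i ∈ C
        · simp [hα, h1, h2]
        · simp [hα, h1, h2]
    have hcase : ∀ i : V, α i = {p1} ∨
        (α i = C \ {p1} ∧ (C \ {p1}).Nonempty) ∨
        (α i = Finset.univ \ C ∧ (Finset.univ \ C : Finset U).Nonempty) := by
      intro i
      by_cases h1 : t i = p1
      · left; simp [hα, h1]
      · by_cases h2 : t i ∈ C
        · right; left
          constructor
          · simp [hα, h1, h2]
          · exact ⟨t i, Finset.mem_sdiff.2 ⟨h2, by simpa using h1⟩⟩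
        · right; right
          constructor
          · simp [hα, h1, h2]
          · exact ⟨t i, Finset.mem_sdiff.2 ⟨Finset.mem_univ _, h2⟩⟩
    have hiff1 : ∀ i : V, (α i = {p1} ↔ t i = p1) := by
      intro i
      constructor
      · intro h
        by_contra h1
        by_cases h2 : t i ∈ C
        · rw [hα] at h; simp only [if_neg h1, if_pos h2] at h; exact hne1 h
        · rw [hα] at h; simp only [if_neg h1, if_neg h2] at h; exact hne2 h
      · intro h; simp [hα, h]
    have hiff2 : ∀ i : V, ((α i = {p1} ∨ α i = C \ {p1}) ↔ t i ∈ C) := by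
      intro i
      constructor
      · rintro (h | h)
        · rw [(hiff1 i).1 h]; exact hp1
        · by_cases h1 : t i = p1
          · rw [h1]; exact hp1
          · by_cases h2 : t i ∈ C
            · exact h2
            · exfalso
              rw [hα] at h; simp only [if_neg h1, if_neg h2] at h
              have : t i ∈ C \ {p1} := h ▸ Finset.mem_sdiff.2 ⟨Finset.mem_univ _, h2⟩
              exact h2 (Finset.mem_sdiff.1 this).1
      · intro h2
        by_cases h1 : t i = p1
        · left; exact (hiff1 i).2 h1
        · right; simp [hα, h1, h2]
    have hcount1 : votes pref' Finset.univ C =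
        (Finset.univ.filter fun i : V => α i = {p1} ∨ α i = C \ {p1}).card := by
      rw [votes_univ_eq]
      congr 1
      apply Finset.filter_congr
      intro i _
      exact (hiff2 i).symm
    have hcount2 : votes pref' Finset.univ {p1} =
        (Finset.univ.filter fun i : V => α i = {p1}).card := by
      rw [votes_univ_eq]
      congr 1
      apply Finset.filter_congr
      intro i _
      simp only [Finset.mem_singleton]
      exact (hiff1 i).symm
    refine ⟨α, hcase, ?_, ?_, ?_⟩
    · refine le_trans (Finset.sum_le_sum fun i _ => ?_) hcost
      calc minLiftCost (pref i) (sw i) (α i) ≤ liftCost (pref i) (sw i) (t i) :=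
            minLiftCost_le _ _ (hmem i)
        _ ≤ swapCost (pref i) (pref' i) (sw i) :=
            liftCost_le_swapCost _ _ _ (hsw i) _ (topOf_topElem _)
    · rw [← hcount1]
      rw [voteFrac, le_div_iff₀ hn] at hφ
      exact hφ
    · rw [← hcount1, ← hcount2]
      rw [voteFrac, voteFrac, ← mul_div_assoc, div_le_div_iff₀ hn hn] at hρ
      have := (mul_le_mul_iff_of_pos_right hn).1 hρ
      linarith
  · rintro ⟨α, hcase, hcost, hφ, hρ⟩
    have hne : ∀ i : V, (α i).Nonempty := by
      intro i
      rcases hcase i with h | ⟨h, hne⟩ | ⟨h, hne⟩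
      · rw [h]; exact Finset.singleton_nonempty _
      · rw [h]; exact hne
      · rw [h]; exact hne
    have hch : ∀ i : V, ∃ p ∈ α i,
        liftCost (pref i) (sw i) p = minLiftCost (pref i) (sw i) (α i) :=
      fun i => exists_minLiftCost _ _ (hne i)
    choose c hc hceq using hch
    refine ⟨fun i => moveTop (pref i) (c i), ?_, ?_, ?_⟩
    · calc ∑ i : V, swapCost (pref i) (moveTop (pref i) (c i)) (sw i)
          = ∑ i : V, minLiftCost (pref i) (sw i) (α i) := by
            refine Finset.sum_congr rfl fun i _ => ?_
            rw [swapCost_moveTop, hceq]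
        _ ≤ B := hcost
    · -- vote fraction of C
      have htop : ∀ i : V, topElem (moveTop (pref i) (c i)) = c i :=
        fun i => ((topOf_iff _ _).1 (moveTop_top _ _)).symm
      have hciff : ∀ i : V, (c i ∈ C ↔ (α i = {p1} ∨ α i = C \ {p1})) := by
        intro i
        rcases hcase i with h | ⟨h, -⟩ | ⟨h, -⟩
        · constructor
          · intro _; exact Or.inl h
          · intro _
            have : c i ∈ ({p1} : Finset U) := by rw [← h]; exact hc i
            rw [Finset.mem_singleton.1 this]; exact hp1
        · constructor
          · intro _; exact Or.inr h
          · intro _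
            exact (Finset.mem_sdiff.1 (show c i ∈ C \ {p1} by rw [← h]; exact hc i)).1
        · have hnC : c i ∉ C := (Finset.mem_sdiff.1 (show c i ∈ Finset.univ \ C by rw [← h]; exact hc i)).2
          constructor
          · intro hC; exact absurd hC hnC
          · rintro (h1 | h1)
            · exact absurd (h.symm.trans h1) hne2
            · exfalso
              exact hnC (Finset.mem_sdiff.1 (show c i ∈ C \ {p1} by rw [← h1]; exact hc i)).1
      have hcv : votes (fun i => moveTop (pref i) (c i)) Finset.univ C =
          (Finset.univ.filter fun i : V => α i = {p1} ∨ α i = C \ {p1}).card := by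
        rw [votes_univ_eq]
        congr 1
        apply Finset.filter_congr
        intro i _
        rw [htop i]
        exact hciff i
      rw [voteFrac, le_div_iff₀ hn, hcv]
      exact hφ
    · have htop : ∀ i : V, topElem (moveTop (pref i) (c i)) = c i :=
        fun i => ((topOf_iff _ _).1 (moveTop_top _ _)).symm
      have hciff : ∀ i : V, (c i ∈ C ↔ (α i = {p1} ∨ α i = C \ {p1})) := by
        intro i
        rcases hcase i with h | ⟨h, -⟩ | ⟨h, -⟩
        · constructor
          · intro _; exact Or.inl h
          · intro _
            have : c i ∈ ({p1} : Finset U) := by rw [← h]; exact hc i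
            rw [Finset.mem_singleton.1 this]; exact hp1
        · constructor
          · intro _; exact Or.inr h
          · intro _
            exact (Finset.mem_sdiff.1 (show c i ∈ C \ {p1} by rw [← h]; exact hc i)).1
        · have hnC : c i ∉ C := (Finset.mem_sdiff.1 (show c i ∈ Finset.univ \ C by rw [← h]; exact hc i)).2
          constructor
          · intro hC; exact absurd hC hnC
          · rintro (h1 | h1)
            · exact absurd (h.symm.trans h1) hne2
            · exfalso
              exact hnC (Finset.mem_sdiff.1 (show c i ∈ C \ {p1} by rw [← h1]; exact hc i)).1
      have hpiff : ∀ i : V, (c i = p1 ↔ α i = {p1}) := by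
        intro i
        rcases hcase i with h | ⟨h, -⟩ | ⟨h, -⟩
        · exact ⟨fun _ => h, fun _ => Finset.mem_singleton.1 (show c i ∈ ({p1}:Finset U) by rw [← h]; exact hc i)⟩
        · constructor
          · intro h1
            exfalso
            have : c i ∈ C \ {p1} := h ▸ hc i
            exact (Finset.mem_sdiff.1 this).2 (Finset.mem_singleton.2 h1)
          · intro h1; exact absurd (h.symm.trans h1) hne1
        · constructor
          · intro h1
            exfalso
            exact (Finset.mem_sdiff.1 (show c i ∈ Finset.univ \ C by rw [← h]; exact hc i)).2 (h1 ▸ hp1)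
          · intro h1; exact absurd (h.symm.trans h1) hne2
      have hcv : votes (fun i => moveTop (pref i) (c i)) Finset.univ C =
          (Finset.univ.filter fun i : V => α i = {p1} ∨ α i = C \ {p1}).card := by
        rw [votes_univ_eq]
        congr 1
        apply Finset.filter_congr
        intro i _
        rw [htop i]
        exact hciff i
      have hp1v : votes (fun i => moveTop (pref i) (c i)) Finset.univ {p1} =
          (Finset.univ.filter fun i : V => α i = {p1}).card := by
        rw [votes_univ_eq]
        congr 1
        apply Finset.filter_congr
        intro i _
        rw [htop i]
        simp only [Finset.mem_singleton]
        exact hpiff i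
      rw [voteFrac, voteFrac, ← mul_div_assoc, div_le_div_iff₀ hn hn, hcv, hp1v]
      exact (mul_le_mul_iff_of_pos_right hn).2 hρ


end Stmt11
end
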